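/- Let G be a finite group and N a normal subgroup such that for every prime p and every Sylow p-subgroup S_p of G, N ∩ S_p ≤ Φ(S_p). Then N is nilpotent. -/

import Mathlib

open Subgroup

/-- Key step: the hypothesis forces `N ≤ Φ(G)`. -/
theorem le_frattini_of_inter_sylow_le_frattini {G : Type*} [Group G] [Finite G]
    (N : Subgroup G) [N.Normal]
    (h : ∀ (p : ℕ), p.Prime → ∀ S : Sylow p G,
      N ⊓ (S : Subgroup G) ≤ (frattini ↥(S : Subgroup G)).map (S : Subgroup G).subtype) :
    N ≤ frattini G := by
  by_contra hN
  -- find a maximal subgroup `M` not containing `N`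
  have : ¬ ∀ M : Subgroup G, IsCoatom M → N ≤ M := by
    intro hall
    exact hN (le_iInf₂ hall)
  push_neg at this
  obtain ⟨M, hM, hNM⟩ := this
  -- `N ⊔ M = ⊤`
  have hsup : N ⊔ M = ⊤ := by
    refine hM.2 _ (lt_of_le_of_ne le_sup_right ?_)
    intro hEq
    exact hNM (hEq ▸ le_sup_left)
  -- a prime dividing the index of M
  have hMne : M.index ≠ 1 := fun h1 => hM.1 (index_eq_one.mp h1)
  obtain ⟨p, hp, hpdvd⟩ := Nat.exists_prime_and_dvd hMne
  haveI : Fact p.Prime := ⟨hp⟩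
  -- a Sylow p-subgroup of M, viewed in G
  obtain ⟨Q⟩ : Nonempty (Sylow p M) := inferInstance
  set Q' : Subgroup G := (Q : Subgroup ↥M).map M.subtype with hQ'
  have hQ'M : Q' ≤ M := map_subtype_le _
  have hQ'p : IsPGroup p Q' := Q.2.map M.subtype
  -- the quotient map onto `G ⧸ N`, restricted to `M`, is surjective
  set π := QuotientGroup.mk' N with hπ
  have hf : Function.Surjective (π.comp M.subtype) := by
    intro x
    obtain ⟨g, rfl⟩ := QuotientGroup.mk'_surjective N x
    have hg : g ∈ (↑(M ⊔ N) : Set G) := by rw [sup_comm N M] at hsup; rw [hsup]; trivial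
    rw [Subgroup.mul_normal] at hg
    obtain ⟨m, hm, n, hn, rfl⟩ := hg
    refine ⟨⟨m, hm⟩, ?_⟩
    show π (M.subtype ⟨m, hm⟩) = π (m * n)
    have h2 : π n = 1 := (QuotientGroup.eq_one_iff n).mpr hn
    rw [map_mul, h2, mul_one]
    rfl
  -- push `Q` to a Sylow subgroup of `G ⧸ N`, pull back to `K = Q' ⊔ N`
  set Sbar : Sylow p (G ⧸ N) := Q.mapSurjective hf
  set K : Subgroup G := Subgroup.comap π (Sbar : Subgroup (G ⧸ N)) with hK
  have hKeq : K = Q' ⊔ N := by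
    have h1 : (Sbar : Subgroup (G ⧸ N)) = Q'.map π := by
      rw [Sylow.coe_mapSurjective, hQ', map_map]
    rw [hK, h1, comap_map_eq, QuotientGroup.ker_mk']
  have hKind : ¬ p ∣ K.index := by
    rw [hK, index_comap_of_surjective _ (QuotientGroup.mk'_surjective N)]
    exact Sbar.not_dvd_index
  have hQ'K : Q' ≤ K := hKeq ▸ le_sup_left
  -- a Sylow p-subgroup `R` of `K` containing `Q'`
  obtain ⟨R, hQR⟩ := (hQ'p.comap_subtype (K := K)).exists_le_sylow
  set R' : Subgroup G := (R : Subgroup K).map K.subtype with hR'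
  have hR'K : R' ≤ K := map_subtype_le _
  have hQ'R' : Q' ≤ R' := by
    have := map_mono (f := K.subtype) hQR
    rwa [show comap K.subtype Q' = Q'.subgroupOf K from rfl, subgroupOf_map_subtype,
      inf_eq_left.mpr hQ'K] at this
  have hR'p : IsPGroup p R' := R.2.map K.subtype
  have hR'ind : ¬ p ∣ R'.index := by
    rw [hR', index_map_subtype]
    exact Nat.Prime.not_dvd_mul hp R.not_dvd_index hKind
  -- `R'` is in fact a Sylow p-subgroup of `G`
  obtain ⟨S, hR'S⟩ := hR'p.exists_le_sylow
  have hSR' : (S : Subgroup G) = R' := by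
    have hrel : R'.relIndex S ∣ R'.index := relIndex_dvd_index_of_le hR'S
    obtain ⟨n, hn⟩ := S.2.exists_card_eq
    have hdvd : R'.relIndex S ∣ p ^ n := hn ▸ index_dvd_card (G := ↥(S : Subgroup G)) _
    obtain ⟨k, hk, hkeq⟩ := (Nat.dvd_prime_pow hp).mp hdvd
    have hk0 : k = 0 := by
      by_contra hk0
      exact hR'ind (dvd_trans (hkeq ▸ dvd_pow_self p hk0) hrel)
    have h1 : R'.relIndex S = 1 := by rw [hkeq, hk0, pow_zero]
    exact le_antisymm (relIndex_eq_one.mp h1) hR'S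
  have hSK : (S : Subgroup G) ≤ K := hSR' ▸ hR'K
  have hQ'S : Q' ≤ (S : Subgroup G) := hSR' ▸ hQ'R'
  -- now `S ≤ Φ(S) ⊔ Q'`, so by the nongenerating property `S ≤ Q' ≤ M`
  have hBF : Q'.subgroupOf (S : Subgroup G) ⊔ frattini ↥(S : Subgroup G) = ⊤ := by
    rw [eq_top_iff']
    intro x
    have hx : (x : G) ∈ (↑(Q' ⊔ N) : Set G) := by
      rw [← hKeq]; exact hSK x.2
    rw [Subgroup.mul_normal] at hx
    obtain ⟨q, hq, n, hn, hqn⟩ := hx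
    set qS : ↥(S : Subgroup G) := ⟨q, hQ'S hq⟩ with hqS
    set y : ↥(S : Subgroup G) := qS⁻¹ * x with hy
    have hyn : (y : G) = n := by
      show q⁻¹ * (x : G) = n
      rw [← hqn]; group
    have hyN : (y : G) ∈ N ⊓ (S : Subgroup G) := ⟨hyn ▸ hn, y.2⟩
    have hfr : y ∈ frattini ↥(S : Subgroup G) := by
      obtain ⟨z, hz, hzeq⟩ := h p hp S hyN
      have : z = y := Subtype.ext hzeq
      rwa [← this]
    have hqQ : qS ∈ Q'.subgroupOf (S : Subgroup G) := hq
    have hxeq : x = qS * y := by rw [hy]; group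
    rw [hxeq]
    exact mul_mem (mem_sup_left hqQ) (mem_sup_right hfr)
  have hStop : Q'.subgroupOf (S : Subgroup G) = ⊤ := frattini_nongenerating hBF
  have hSQ' : (S : Subgroup G) ≤ Q' := subgroupOf_eq_top.mp hStop
  -- contradiction with `p ∣ M.index`
  have hSM : (S : Subgroup G) ≤ M := hSQ'.trans hQ'M
  exact S.not_dvd_index (hpdvd.trans (index_dvd_of_le hSM))

/-- Tate's nilpotency criterion: if `N ⊴ G` satisfies `N ∩ S_p ≤ Φ(S_p)` for every prime `p`
and every Sylow `p`-subgroup `S_p` of `G`, then `N` is nilpotent. -/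
theorem nilpotent_of_inter_sylow_le_frattini {G : Type*} [Group G] [Finite G]
    (N : Subgroup G) [N.Normal]
    (h : ∀ (p : ℕ), p.Prime → ∀ S : Sylow p G,
      N ⊓ (S : Subgroup G) ≤ (frattini ↥(S : Subgroup G)).map (S : Subgroup G).subtype) :
    Group.IsNilpotent N := by
  have hle := le_frattini_of_inter_sylow_le_frattini N h
  have : Group.IsNilpotent ↥(frattini G) := frattini_nilpotent
  exact (Group.isNilpotent_congr (Subgroup.subgroupOfEquivOfLe hle)).mp inferInstance
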